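/- Let L > 0 and let γ : [0, L] → ℝ² satisfy |γ(s) − γ(t)| ≤ C₂ |s − t| and |γ(s) − γ(t)| ≥ c |s − t| for all s, t ∈ [0, L], for some constants 0 < c ≤ C₂ (a bi-Lipschitz curve). Then the pushforward m under γ of Lebesgue measure on [0, L] belongs to the generalized Kato class: lim_{ε→0⁺} sup_{x∈ℝ²} ∫_{B(x,ε)} |ln|x−y|| m(dy) = 0. -/

import Mathlib

open MeasureTheory Filter Set

noncomputable section

/-- The plane `ℝ²` as a Euclidean space. -/
abbrev Plane := EuclideanSpace ℝ (Fin 2)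

/-- A positive Borel measure `m` on `ℝ²` belongs to the generalized Kato class if
`lim_{ε→0⁺} sup_{x∈ℝ²} ∫_{B(x,ε)} |ln|x−y|| m(dy) = 0`. -/
def GenKatoClass (m : Measure Plane) : Prop :=
  Tendsto (fun ε : ℝ => ⨆ x : Plane,
      ∫⁻ y in Metric.ball x ε, ENNReal.ofReal |Real.log (dist x y)| ∂m)
    (nhdsWithin 0 (Set.Ioi 0)) (nhds 0)

lemma aux_neg_log_le {z : ℝ} (hz : 0 < z) : -Real.log z ≤ 2 / Real.sqrt z := by
  have hs : 0 < Real.sqrt z := Real.sqrt_pos.mpr hz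
  have h1 : Real.log (Real.sqrt z)⁻¹ ≤ (Real.sqrt z)⁻¹ - 1 :=
    Real.log_le_sub_one_of_pos (by positivity)
  have h2 : Real.log z = 2 * Real.log (Real.sqrt z) := by
    rw [Real.log_sqrt hz.le]; ring
  rw [Real.log_inv] at h1
  rw [div_eq_mul_inv]
  nlinarith [inv_nonneg.mpr hs.le]

lemma aux_lintegral_rpow (K r a : ℝ) (hK : 0 ≤ K) (hr : 0 ≤ r) :
    ∫⁻ u in Ioo (a - r) (a + r), ENNReal.ofReal (K * |u - a| ^ (-(1:ℝ)/2)) ≤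
      ENNReal.ofReal (4 * K * Real.sqrt r) := by
  set f : ℝ → ENNReal := fun v => ENNReal.ofReal (K * |v| ^ (-(1:ℝ)/2)) with hf
  -- translation
  have hA : ∫⁻ u in Ioo (a - r) (a + r), ENNReal.ofReal (K * |u - a| ^ (-(1:ℝ)/2))
      = ∫⁻ v in Ioo (-r) r, f v := by
    have h := (measurePreserving_add_right volume a).setLIntegral_comp_emb
        (measurableEmbedding_addRight a)
        (fun u => ENNReal.ofReal (K * |u - a| ^ (-(1:ℝ)/2))) (Ioo (-r) r)
    rw [Set.image_add_const_Ioo] at h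
    rw [show (-r + a) = a - r by ring, show (r + a) = a + r by ring] at h
    rw [← h]
    apply setLIntegral_congr_fun measurableSet_Ioo
    exact fun v _ => by simp [hf]
  -- reflection
  have hC : ∫⁻ v in Ioc (-r) 0, f v = ∫⁻ w in Ico 0 r, f w := by
    have h := (Measure.measurePreserving_neg (volume : Measure ℝ)).setLIntegral_comp_emb
        measurableEmbedding_neg f (Ico 0 r)
    rw [Set.image_neg_Ico, neg_zero] at h
    rw [← h]
    apply setLIntegral_congr_fun measurableSet_Ico
    exact fun v _ => by simp [hf]
  -- value on the positive side
  have hint : IntegrableOn (fun w : ℝ => K * w ^ (-(1:ℝ)/2)) (Ioo 0 r) volume := by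
    have h1 : IntervalIntegrable (fun x : ℝ => x ^ (-(1:ℝ)/2)) volume 0 r :=
      intervalIntegral.intervalIntegrable_rpow' (by norm_num)
    exact (h1.1.mono_set Ioo_subset_Ioc_self).const_mul K
  have hpos : 0 ≤ᶠ[ae (volume.restrict (Ioo 0 r))] fun w : ℝ => K * w ^ (-(1:ℝ)/2) := by
    rw [EventuallyLE, ae_restrict_iff' measurableSet_Ioo]
    exact ae_of_all _ fun w hw => mul_nonneg hK (Real.rpow_nonneg hw.1.le _)
  have hval : ∫ w in Ioo 0 r, K * w ^ (-(1:ℝ)/2) = K * (2 * Real.sqrt r) := by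
    rw [← integral_Ioc_eq_integral_Ioo, ← intervalIntegral.integral_of_le hr,
      intervalIntegral.integral_const_mul, integral_rpow (Or.inl (by norm_num))]
    rw [show (-(1:ℝ)/2 + 1) = 1/2 by norm_num, Real.zero_rpow (by norm_num),
      Real.sqrt_eq_rpow]
    ring
  have hX : ∫⁻ w in Ioo 0 r, f w = ENNReal.ofReal (K * (2 * Real.sqrt r)) := by
    have hcg : ∫⁻ w in Ioo 0 r, f w
        = ∫⁻ w in Ioo 0 r, ENNReal.ofReal (K * w ^ (-(1:ℝ)/2)) := by
      apply setLIntegral_congr_fun measurableSet_Ioo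
      exact fun w hw => by rw [hf]; simp [abs_of_pos hw.1]
    rw [hcg, ← ofReal_integral_eq_lintegral_ofReal hint hpos, hval]
  have hD : ∫⁻ w in Ico 0 r, f w = ∫⁻ w in Ioo 0 r, f w :=
    (setLIntegral_congr (Ioo_ae_eq_Ico (μ := volume) (a := 0) (b := r))).symm
  -- put it together
  have hsub : Ioo (-r) r ⊆ Ioc (-r) 0 ∪ Ioo 0 r := by
    intro v hv
    rcases le_or_gt v 0 with h | h
    · exact Or.inl ⟨hv.1, h⟩
    · exact Or.inr ⟨h, hv.2⟩
  have hdisj : Disjoint (Ioc (-r) 0) (Ioo 0 r) := by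
    rw [Set.disjoint_left]
    rintro v ⟨_, h0⟩ ⟨h0', _⟩
    exact absurd h0' (not_lt.2 h0)
  calc ∫⁻ u in Ioo (a - r) (a + r), ENNReal.ofReal (K * |u - a| ^ (-(1:ℝ)/2))
      = ∫⁻ v in Ioo (-r) r, f v := hA
    _ ≤ ∫⁻ v in Ioc (-r) 0 ∪ Ioo 0 r, f v := lintegral_mono_set hsub
    _ = (∫⁻ v in Ioc (-r) 0, f v) + ∫⁻ v in Ioo 0 r, f v :=
        lintegral_union measurableSet_Ioo hdisj
    _ = ENNReal.ofReal (K * (2 * Real.sqrt r)) + ENNReal.ofReal (K * (2 * Real.sqrt r)) := by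
        rw [hC, hD, hX]
    _ = ENNReal.ofReal (4 * K * Real.sqrt r) := by
        rw [← ENNReal.ofReal_add (by positivity) (by positivity)]
        congr 1; ring

theorem biLipschitz_curve_genKato (L : ℝ) (hL : 0 < L)
    (γ : ℝ → Plane) (c C₂ : ℝ) (hc : 0 < c) (hcC : c ≤ C₂)
    (hlip : ∀ s ∈ Set.Icc (0 : ℝ) L, ∀ t ∈ Set.Icc (0 : ℝ) L,
      dist (γ s) (γ t) ≤ C₂ * |s - t|)
    (hlow : ∀ s ∈ Set.Icc (0 : ℝ) L, ∀ t ∈ Set.Icc (0 : ℝ) L,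
      c * |s - t| ≤ dist (γ s) (γ t)) :
    GenKatoClass (Measure.map γ ((volume : Measure ℝ).restrict (Set.Icc 0 L))) := by
  set μ : Measure ℝ := (volume : Measure ℝ).restrict (Set.Icc 0 L) with hμ
  set Kc : ℝ := 2 * Real.sqrt (2 / c) with hKc
  have hKc0 : 0 ≤ Kc := by positivity
  -- continuity of γ on [0, L]
  have hγc : ContinuousOn γ (Set.Icc 0 L) := by
    have : LipschitzOnWith (Real.toNNReal C₂) γ (Set.Icc 0 L) := by
      rw [lipschitzOnWith_iff_dist_le_mul]
      intro s hs t ht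
      rw [Real.dist_eq, Real.coe_toNNReal C₂ (hc.le.trans hcC)]
      exact hlip s hs t ht
    exact this.continuousOn
  have haem : AEMeasurable γ μ := hγc.aemeasurable measurableSet_Icc
  -- the main uniform estimate
  have main : ∀ ε : ℝ, 0 < ε → ε < 1 → ∀ x : Plane,
      (∫⁻ y in Metric.ball x ε, ENNReal.ofReal |Real.log (dist x y)|
        ∂(Measure.map γ μ)) ≤ ENNReal.ofReal (4 * Kc * Real.sqrt (2 * ε / c)) := by
    intro ε hε0 hε1 x
    set r : ℝ := 2 * ε / c with hrdef
    have hr0 : 0 < r := by positivity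
    -- minimizing point
    obtain ⟨t₀, ht₀, hmin⟩ := isCompact_Icc.exists_isMinOn (nonempty_Icc.mpr hL.le)
      ((continuous_const.dist continuous_id).comp_continuousOn hγc)
    have hkey : ∀ t ∈ Set.Icc (0:ℝ) L, c * |t - t₀| ≤ 2 * dist x (γ t) := by
      intro t ht
      have h1 := hlow t ht t₀ ht₀
      have h2 := dist_triangle (γ t) x (γ t₀)
      have h3 : dist x (γ t₀) ≤ dist x (γ t) := hmin ht
      have h4 : dist (γ t) x = dist x (γ t) := dist_comm _ _
      linarith
    -- measurability of the integrand
    have hmf : Measurable fun y : Plane => ENNReal.ofReal |Real.log (dist x y)| :=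
      ((Real.measurable_log.comp (measurable_const.dist measurable_id)).abs).ennreal_ofReal
    have hmF : Measurable fun u : ℝ => ENNReal.ofReal (Kc * |u - t₀| ^ (-(1:ℝ)/2)) :=
      ((measurable_const.mul (((measurable_id.sub_const t₀).abs).pow_const
        (-(1:ℝ)/2)))).ennreal_ofReal
    -- rewrite as an integral over [0, L]
    rw [← lintegral_indicator measurableSet_ball, lintegral_map'
      ((hmf.indicator measurableSet_ball).aemeasurable) haem]
    -- a.e. pointwise bound
    have hne : ∀ᵐ t ∂μ, t ≠ t₀ := by
      have hvol : ∀ᵐ t : ℝ ∂(volume : Measure ℝ), t ≠ t₀ := by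
        have hset : {t : ℝ | ¬ t ≠ t₀} = {t₀} := by ext t; simp
        rw [ae_iff, hset]
        exact measure_singleton t₀
      exact ae_mono Measure.restrict_le_self hvol
    have hbnd : ∫⁻ t, (Metric.ball x ε).indicator
          (fun y => ENNReal.ofReal |Real.log (dist x y)|) (γ t) ∂μ ≤
        ∫⁻ t, (Ioo (t₀ - r) (t₀ + r)).indicator
          (fun u => ENNReal.ofReal (Kc * |u - t₀| ^ (-(1:ℝ)/2))) t ∂μ := by
      refine lintegral_mono_ae ?_
      filter_upwards [ae_restrict_mem measurableSet_Icc, hne] with t ht htne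
      by_cases hb : γ t ∈ Metric.ball x ε
      · rw [indicator_of_mem hb]
        have hd : dist x (γ t) < ε := by
          rw [dist_comm]; exact Metric.mem_ball.mp hb
        have hkt := hkey t ht
        have habs : 0 < |t - t₀| := abs_pos.mpr (sub_ne_zero.mpr htne)
        have htI : t ∈ Ioo (t₀ - r) (t₀ + r) := by
          have h5 : |t - t₀| < r := by
            rw [hrdef]
            rw [lt_div_iff₀ hc, mul_comm]
            nlinarith [dist_nonneg (x := x) (y := γ t)]
          rw [mem_Ioo]
          rw [abs_sub_lt_iff] at h5
          constructor <;> linarith [h5.1, h5.2]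
        rw [indicator_of_mem htI]
        apply ENNReal.ofReal_le_ofReal
        -- the real inequality
        have hrpow : Kc * |t - t₀| ^ (-(1:ℝ)/2) = 2 / (Real.sqrt (c/2) * Real.sqrt |t - t₀|) := by
          have hs1 : 0 < Real.sqrt (c/2) := Real.sqrt_pos.mpr (by positivity)
          have hs2 : 0 < Real.sqrt (2/c) := Real.sqrt_pos.mpr (by positivity)
          have hst : 0 < Real.sqrt |t - t₀| := Real.sqrt_pos.mpr habs
          have h12 : Real.sqrt (c/2) * Real.sqrt (2/c) = 1 := by
            rw [← Real.sqrt_mul (by positivity)]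
            rw [show (c/2) * (2/c) = 1 by field_simp]
            exact Real.sqrt_one
          have hpow : |t - t₀| ^ (-(1:ℝ)/2) = (Real.sqrt |t - t₀|)⁻¹ := by
            rw [show (-(1:ℝ)/2) = -(1/2) by norm_num, Real.rpow_neg (abs_nonneg _),
              Real.sqrt_eq_rpow]
          rw [hpow, hKc]
          rw [eq_div_iff (by positivity)]
          have ht' : (Real.sqrt |t - t₀|)⁻¹ * Real.sqrt |t - t₀| = 1 :=
            inv_mul_cancel₀ hst.ne'
          linear_combination 2 * Real.sqrt (2/c) * Real.sqrt (c/2) * ht' + 2 * h12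
        rw [hrpow]
        rcases eq_or_lt_of_le (dist_nonneg (x := x) (y := γ t)) with hd0 | hd0
        · rw [← hd0, Real.log_zero, abs_zero]
          positivity
        · have hlog : |Real.log (dist x (γ t))| = -Real.log (dist x (γ t)) :=
            abs_of_nonpos (Real.log_nonpos dist_nonneg (by linarith))
          rw [hlog]
          have hz : 0 < (c/2) * |t - t₀| := by positivity
          have hzd : (c/2) * |t - t₀| ≤ dist x (γ t) := by linarith
          calc -Real.log (dist x (γ t)) ≤ -Real.log ((c/2) * |t - t₀|) := by
                have := Real.log_le_log hz hzd; linarith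
            _ ≤ 2 / Real.sqrt ((c/2) * |t - t₀|) := aux_neg_log_le hz
            _ = 2 / (Real.sqrt (c/2) * Real.sqrt |t - t₀|) := by
                rw [Real.sqrt_mul (by positivity)]
      · rw [indicator_of_notMem hb]
        exact zero_le
    refine hbnd.trans ?_
    rw [lintegral_indicator measurableSet_Ioo]
    have hres : ∫⁻ t in Ioo (t₀ - r) (t₀ + r),
          ENNReal.ofReal (Kc * |t - t₀| ^ (-(1:ℝ)/2)) ∂μ ≤
        ∫⁻ t in Ioo (t₀ - r) (t₀ + r),
          ENNReal.ofReal (Kc * |t - t₀| ^ (-(1:ℝ)/2)) ∂(volume : Measure ℝ) := by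
      refine lintegral_mono' ?_ le_rfl
      rw [hμ, Measure.restrict_restrict measurableSet_Ioo]
      exact Measure.restrict_mono inter_subset_left le_rfl
    exact hres.trans (aux_lintegral_rpow Kc r t₀ hKc0 hr0.le)
  -- conclude by squeezing
  unfold GenKatoClass
  have htend : Tendsto (fun ε : ℝ => ENNReal.ofReal (4 * Kc * Real.sqrt (2 * ε / c)))
      (nhdsWithin 0 (Set.Ioi 0)) (nhds 0) := by
    have hcont : Tendsto (fun ε : ℝ => 4 * Kc * Real.sqrt (2 * ε / c)) (nhds 0)
        (nhds (4 * Kc * Real.sqrt (2 * 0 / c))) := by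
      apply Continuous.tendsto
      exact continuous_const.mul (Real.continuous_sqrt.comp (by continuity))
    have h0 : (4 * Kc * Real.sqrt (2 * 0 / c)) = 0 := by simp
    rw [h0] at hcont
    have := ENNReal.tendsto_ofReal hcont
    simpa using this.mono_left nhdsWithin_le_nhds
  refine tendsto_of_tendsto_of_tendsto_of_le_of_le' tendsto_const_nhds htend
    (Eventually.of_forall fun _ => zero_le) ?_
  filter_upwards [Ioo_mem_nhdsGT_of_mem (by exact ⟨le_refl (0:ℝ), one_pos⟩)] with ε hε
  exact iSup_le fun x => main ε hε.1 hε.2 x
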